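/- Suppose AᵀA ≠ 0 and β > 0, and let 0 < δ < 2(λ₁ + β)/λ₁. Then for every vector g ∈ ℝ^d lying in the column space (range) of AᵀA, one has ‖g − δ · AᵀA K_β g‖ ≤ max{|1 − δλ₁/(λ₁+β)|, |1 − δλ_r/(λ_r+β)|} · ‖g‖, and moreover max{|1 − δλ₁/(λ₁+β)|, |1 − δλ_r/(λ_r+β)|} < 1. -/

import Mathlib

open Matrix Finset

/-- Euclidean norm of a vector in `ℝ^d`. -/
noncomputable def vecEnorm {d : ℕ} (v : Fin d → ℝ) : ℝ :=
  Real.sqrt (∑ i, v i ^ 2)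

lemma enorm_mulVec_orth {d : ℕ} (V : Matrix (Fin d) (Fin d) ℝ) (hV : Vᵀ * V = 1)
    (x : Fin d → ℝ) : vecEnorm (V.mulVec x) = vecEnorm x := by
  unfold vecEnorm
  congr 1
  have h1 : ∑ i, (V.mulVec x i) ^ 2 = (V.mulVec x) ⬝ᵥ (V.mulVec x) := by
    simp [dotProduct, pow_two]
  have h2 : (V.mulVec x) ⬝ᵥ (V.mulVec x) = x ⬝ᵥ x := by
    rw [Matrix.dotProduct_mulVec, ← Matrix.mulVec_transpose, Matrix.mulVec_mulVec, hV,
      Matrix.one_mulVec]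
  rw [h1, h2]
  simp [dotProduct, pow_two]

/-- for any vector `g` in the column space of `AᵀA`,
`‖g − δ AᵀA K_β g‖ ≤ max{|1 − δλ₁/(λ₁+β)|, |1 − δλ_r/(λ_r+β)|} ‖g‖`, and this maximum
is strictly less than `1` whenever `0 < δ < 2(λ₁+β)/λ₁`. -/
theorem preconditioned_contraction_on_range
    (n d : ℕ) (hd : 0 < d)
    (A : Matrix (Fin n) (Fin d) ℝ)
    (hAnz : Aᵀ * A ≠ 0)
    (lam : Fin d → ℝ) (V : Matrix (Fin d) (Fin d) ℝ)
    (hV : Vᵀ * V = 1)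
    (hdiag : Aᵀ * A = V * Matrix.diagonal lam * Vᵀ)
    (hanti : Antitone lam)
    (r : ℕ) (hr1 : 1 ≤ r) (hrd : r ≤ d)
    (hlamr : 0 < lam ⟨r - 1, by omega⟩)
    (hzero : ∀ j : Fin d, r ≤ (j : ℕ) → lam j = 0)
    (β δ : ℝ) (hβ : 0 < β)
    (hδ0 : 0 < δ) (hδ : δ < 2 * ((lam ⟨0, hd⟩ + β) / lam ⟨0, hd⟩)) :
    (∀ g : Fin d → ℝ, (∃ y : Fin d → ℝ, (Aᵀ * A).mulVec y = g) →
      vecEnorm (g - δ • ((Aᵀ * A) * (Aᵀ * A + β • 1)⁻¹).mulVec g) ≤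
        max |1 - δ * (lam ⟨0, hd⟩ / (lam ⟨0, hd⟩ + β))|
            |1 - δ * (lam ⟨r - 1, by omega⟩ / (lam ⟨r - 1, by omega⟩ + β))| *
          vecEnorm g) ∧
    max |1 - δ * (lam ⟨0, hd⟩ / (lam ⟨0, hd⟩ + β))|
        |1 - δ * (lam ⟨r - 1, by omega⟩ / (lam ⟨r - 1, by omega⟩ + β))| < 1 := by
  have hrd' : r - 1 < d := by omega
  set i1 : Fin d := ⟨0, hd⟩ with hi1
  set ir : Fin d := ⟨r - 1, hrd'⟩ with hir
  set l1 : ℝ := lam i1 with hl1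
  set lr : ℝ := lam ir with hlr
  set C : ℝ := max |1 - δ * (l1 / (l1 + β))| |1 - δ * (lr / (lr + β))| with hC
  have hVVt : V * Vᵀ = 1 := mul_eq_one_comm.mp hV
  have hcancel : ∀ X : Matrix (Fin d) (Fin d) ℝ, Vᵀ * (V * X) = X := fun X => by
    rw [← Matrix.mul_assoc, hV, Matrix.one_mul]
  have hlr1 : lr ≤ l1 := hanti (by simp [hi1, hir, Fin.le_def])
  have hl1pos : 0 < l1 := lt_of_lt_of_le hlamr hlr1
  have hden1 : 0 < l1 + β := by linarith
  have hdenr : 0 < lr + β := by linarith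
  have hlamnn : ∀ j : Fin d, 0 ≤ lam j := by
    intro j
    by_cases hj : r ≤ (j : ℕ)
    · rw [hzero j hj]
    · exact le_of_lt (lt_of_lt_of_le hlamr (hanti (by simp [hir, Fin.le_def]; omega)))
  have hden : ∀ j : Fin d, 0 < lam j + β := fun j => by linarith [hlamnn j]
  -- the resolvent
  have hsum : Aᵀ * A + β • (1 : Matrix (Fin d) (Fin d) ℝ) =
      V * Matrix.diagonal (fun j => lam j + β) * Vᵀ := by
    have h1 : Matrix.diagonal (fun j : Fin d => lam j + β) =
        Matrix.diagonal lam + β • 1 := by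
      rw [Matrix.smul_one_eq_diagonal, Matrix.diagonal_add]
    rw [hdiag, h1, Matrix.mul_add, Matrix.add_mul]
    congr 1
    rw [Matrix.mul_smul, Matrix.mul_one, Matrix.smul_mul, hVVt]
  have hinv : (Aᵀ * A + β • (1 : Matrix (Fin d) (Fin d) ℝ))⁻¹ =
      V * Matrix.diagonal (fun j => (lam j + β)⁻¹) * Vᵀ := by
    apply Matrix.inv_eq_right_inv
    rw [hsum]
    simp only [Matrix.mul_assoc]
    rw [hcancel, ← Matrix.mul_assoc (Matrix.diagonal _), Matrix.diagonal_mul_diagonal]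
    have : (fun j : Fin d => (lam j + β) * (lam j + β)⁻¹) = fun _ => (1 : ℝ) := by
      funext j
      exact mul_inv_cancel₀ (ne_of_gt (hden j))
    rw [this, Matrix.diagonal_one, Matrix.one_mul, hVVt]
  have hM : (Aᵀ * A) * (Aᵀ * A + β • (1 : Matrix (Fin d) (Fin d) ℝ))⁻¹ =
      V * Matrix.diagonal (fun j => lam j * (lam j + β)⁻¹) * Vᵀ := by
    rw [hinv, hdiag]
    simp only [Matrix.mul_assoc]
    rw [hcancel, ← Matrix.mul_assoc (Matrix.diagonal lam), Matrix.diagonal_mul_diagonal]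
  -- the coefficients
  set c : Fin d → ℝ := fun j => 1 - δ * (lam j / (lam j + β)) with hc
  have hC0 : 0 ≤ C := le_trans (abs_nonneg _) (le_max_left _ _)
  have hcbound : ∀ j : Fin d, (j : ℕ) < r → |c j| ≤ C := by
    intro j hj
    have hjr : lr ≤ lam j := hanti (by simp [hir, Fin.le_def]; omega)
    have hj1 : lam j ≤ l1 := hanti (by simp [hi1, Fin.le_def])
    have hjpos : 0 < lam j := lt_of_lt_of_le hlamr hjr
    have hjden : 0 < lam j + β := hden j
    have hmono : ∀ a b : ℝ, 0 < a → 0 < b → a ≤ b → a / (a + β) ≤ b / (b + β) := by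
      intro a b ha hb hab
      rw [div_le_div_iff₀ (by linarith) (by linarith)]
      nlinarith
    have hlow : 1 - δ * (l1 / (l1 + β)) ≤ c j := by
      have := hmono (lam j) l1 hjpos hl1pos hj1
      have := mul_le_mul_of_nonneg_left this (le_of_lt hδ0)
      simp only [hc]; linarith
    have hhigh : c j ≤ 1 - δ * (lr / (lr + β)) := by
      have := hmono lr (lam j) hlamr hjpos hjr
      have := mul_le_mul_of_nonneg_left this (le_of_lt hδ0)
      simp only [hc]; linarith
    rw [abs_le]
    exact ⟨le_trans (neg_le_neg (le_max_left _ _)) (le_trans (neg_abs_le _) hlow),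
      le_trans hhigh (le_trans (le_abs_self _) (le_max_right _ _))⟩
  constructor
  · -- main inequality
    intro g ⟨y, hy⟩
    set w : Fin d → ℝ := Vᵀ.mulVec g with hw
    have hg : V.mulVec w = g := by
      rw [hw, Matrix.mulVec_mulVec, hVVt, Matrix.one_mulVec]
    have hwzero : ∀ j : Fin d, r ≤ (j : ℕ) → w j = 0 := by
      intro j hj
      have hw2 : w = (Matrix.diagonal lam).mulVec (Vᵀ.mulVec y) := by
        rw [hw, ← hy, hdiag, Matrix.mulVec_mulVec, Matrix.mul_assoc V, hcancel,
          ← Matrix.mulVec_mulVec]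
      rw [hw2]
      show ((Matrix.diagonal lam).mulVec (Vᵀ.mulVec y)) j = 0
      rw [Matrix.mulVec_diagonal, hzero j hj, zero_mul]
    have hvec : g - δ • ((Aᵀ * A) * (Aᵀ * A + β • 1)⁻¹).mulVec g =
        V.mulVec (fun j => c j * w j) := by
      rw [hM]
      have h1 : (V * Matrix.diagonal (fun j => lam j * (lam j + β)⁻¹) * Vᵀ).mulVec g =
          V.mulVec ((Matrix.diagonal (fun j => lam j * (lam j + β)⁻¹)).mulVec w) := by
        rw [hw, Matrix.mulVec_mulVec, Matrix.mulVec_mulVec, Matrix.mul_assoc]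
      rw [h1, ← hg, ← Matrix.mulVec_smul, ← Matrix.mulVec_sub]
      have h2 : (w - δ • (Matrix.diagonal fun j => lam j * (lam j + β)⁻¹) *ᵥ w) =
          fun j => c j * w j := by
        funext j
        simp only [Pi.sub_apply, Pi.smul_apply, Matrix.mulVec_diagonal, smul_eq_mul, hc,
          div_eq_mul_inv]
        ring
      rw [h2]
    rw [hvec, enorm_mulVec_orth V hV]
    have hgw : vecEnorm g = vecEnorm w := by rw [← hg, enorm_mulVec_orth V hV]
    rw [hgw]
    -- diagonal contraction bound
    unfold vecEnorm
    have key : ∀ j : Fin d, (c j * w j) ^ 2 ≤ C ^ 2 * (w j) ^ 2 := by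
      intro j
      by_cases hj : r ≤ (j : ℕ)
      · rw [hwzero j hj]; simp
      · have hcj := hcbound j (by omega)
        have : (c j) ^ 2 ≤ C ^ 2 := by
          rw [← sq_abs (c j)]
          exact pow_le_pow_left₀ (abs_nonneg _) hcj 2
        nlinarith [sq_nonneg (w j)]
    calc Real.sqrt (∑ j, (c j * w j) ^ 2)
        ≤ Real.sqrt (∑ j, C ^ 2 * (w j) ^ 2) :=
          Real.sqrt_le_sqrt (Finset.sum_le_sum fun j _ => key j)
      _ = Real.sqrt (C ^ 2 * ∑ j, (w j) ^ 2) := by rw [← Finset.mul_sum]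
      _ = C * Real.sqrt (∑ j, (w j) ^ 2) := by
          rw [Real.sqrt_mul (sq_nonneg C), Real.sqrt_sq hC0]
  · -- the maximum is < 1
    have h1' : δ * l1 < 2 * (l1 + β) := by
      rw [mul_div_assoc'] at hδ
      exact (lt_div_iff₀ hl1pos).mp hδ
    have hr' : δ * lr < 2 * (lr + β) := by
      nlinarith [mul_lt_mul_of_pos_right h1' hlamr,
        mul_le_mul_of_nonneg_left hlr1 (le_of_lt hβ)]
    apply max_lt
    · rw [abs_lt]
      constructor
      · have : δ * (l1 / (l1 + β)) < 2 := by
          rw [mul_div_assoc', div_lt_iff₀ hden1]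
          linarith
        linarith
      · have : 0 < δ * (l1 / (l1 + β)) := mul_pos hδ0 (div_pos hl1pos hden1)
        linarith
    · rw [abs_lt]
      constructor
      · have : δ * (lr / (lr + β)) < 2 := by
          rw [mul_div_assoc', div_lt_iff₀ hdenr]
          linarith
        linarith
      · have : 0 < δ * (lr / (lr + β)) := mul_pos hδ0 (div_pos hlamr hdenr)
        linarith
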